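/- Let s = (s_k)_{k≥0} be a sequence of real numbers and define a_{n,k} by a_{0,k} = [k = 0], a_{n,k} = 0 for k < 0, and a_{n,k} = a_{n-1,k-1} + s_k·a_{n-1,k} + a_{n-1,k+1}. Then for all m, n ≥ 0, ∑_{k≥0} a_{n,k}·a_{m,k} = a_{n+m,0}. -/
import Mathlib


/-- For the admissible matrix `a` of a sequence `s`,
`∑_{k ≥ 0} a n k * a m k = a (n+m) 0`. The sum is finite since `a n k = 0`
for `k > n`, so it can be taken over `0 ≤ k ≤ n`. -/
theorem admissible_orthogonality (s : ℕ → ℝ) (a : ℕ → ℤ → ℝ)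
    (h0 : ∀ k : ℤ, a 0 k = if k = 0 then 1 else 0)
    (hneg : ∀ (n : ℕ) (k : ℤ), k < 0 → a n k = 0)
    (hrec : ∀ (n : ℕ) (k : ℤ), 0 ≤ k →
      a (n + 1) k = a n (k - 1) + s k.toNat * a n k + a n (k + 1)) :
    ∀ m n : ℕ, ∑ k ∈ Finset.range (n + 1), a n (k : ℤ) * a m (k : ℤ) = a (n + m) 0 := by
  -- a n k = 0 for k > n
  have hzero : ∀ (n : ℕ) (k : ℤ), (n : ℤ) < k → a n k = 0 := by
    intro n
    induction n with
    | zero => intro k hk; rw [h0, if_neg (by omega)]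
    | succ n ih =>
      intro k hk
      have hk' : (0 : ℤ) ≤ k := by push_cast at hk; omega
      rw [hrec n k hk', ih (k - 1) (by push_cast at hk ⊢; omega),
        ih k (by push_cast at hk ⊢; omega), ih (k + 1) (by push_cast at hk ⊢; omega)]
      ring
  -- shift lemma
  have hshift : ∀ (N n m : ℕ), a m ((N : ℤ) + 1) = 0 →
      ∑ k ∈ Finset.range (N + 1), a n ((k : ℤ) - 1) * a m (k : ℤ)
        = ∑ k ∈ Finset.range (N + 1), a n (k : ℤ) * a m ((k : ℤ) + 1) := by
    intro N n m hNm
    rw [Finset.sum_range_succ' (fun k => a n ((k : ℤ) - 1) * a m (k : ℤ)) N]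
    rw [Finset.sum_range_succ (fun k => a n (k : ℤ) * a m ((k : ℤ) + 1)) N]
    have h1 : a n (-1 : ℤ) = 0 := hneg _ _ (by norm_num)
    push_cast
    rw [hNm, h1]
    simp only [add_sub_cancel_right, mul_zero, zero_mul, add_zero]
  -- symmetry
  have hsym : ∀ (N n m : ℕ), n ≤ N → m ≤ N →
      ∑ k ∈ Finset.range (N + 1), a (n + 1) (k : ℤ) * a m (k : ℤ)
        = ∑ k ∈ Finset.range (N + 1), a n (k : ℤ) * a (m + 1) (k : ℤ) := by
    intro N n m hn hm
    have A := hshift N n m (hzero m _ (by omega))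
    have B := hshift N m n (hzero n _ (by omega))
    have B' : ∑ k ∈ Finset.range (N + 1), a n (k : ℤ) * a m ((k : ℤ) - 1)
        = ∑ k ∈ Finset.range (N + 1), a n ((k : ℤ) + 1) * a m (k : ℤ) := by
      calc ∑ k ∈ Finset.range (N + 1), a n (k : ℤ) * a m ((k : ℤ) - 1)
          = ∑ k ∈ Finset.range (N + 1), a m ((k : ℤ) - 1) * a n (k : ℤ) :=
            Finset.sum_congr rfl fun k _ => mul_comm _ _
        _ = ∑ k ∈ Finset.range (N + 1), a m (k : ℤ) * a n ((k : ℤ) + 1) := B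
        _ = _ := Finset.sum_congr rfl fun k _ => mul_comm _ _
    calc ∑ k ∈ Finset.range (N + 1), a (n + 1) (k : ℤ) * a m (k : ℤ)
        = ∑ k ∈ Finset.range (N + 1),
            (a n ((k : ℤ) - 1) * a m (k : ℤ) + s k * (a n (k : ℤ) * a m (k : ℤ))
              + a n ((k : ℤ) + 1) * a m (k : ℤ)) := by
          refine Finset.sum_congr rfl fun k _ => ?_
          rw [hrec n (k : ℤ) (by positivity)]
          simp only [Int.toNat_natCast]
          ring
      _ = (∑ k ∈ Finset.range (N + 1), a n ((k : ℤ) - 1) * a m (k : ℤ))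
            + (∑ k ∈ Finset.range (N + 1), s k * (a n (k : ℤ) * a m (k : ℤ)))
            + ∑ k ∈ Finset.range (N + 1), a n ((k : ℤ) + 1) * a m (k : ℤ) := by
          rw [Finset.sum_add_distrib, Finset.sum_add_distrib]
      _ = (∑ k ∈ Finset.range (N + 1), a n (k : ℤ) * a m ((k : ℤ) - 1))
            + (∑ k ∈ Finset.range (N + 1), s k * (a n (k : ℤ) * a m (k : ℤ)))
            + ∑ k ∈ Finset.range (N + 1), a n (k : ℤ) * a m ((k : ℤ) + 1) := by
          rw [A, B']; ring
      _ = ∑ k ∈ Finset.range (N + 1),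
            (a n (k : ℤ) * a m ((k : ℤ) - 1) + s k * (a n (k : ℤ) * a m (k : ℤ))
              + a n (k : ℤ) * a m ((k : ℤ) + 1)) := by
          rw [Finset.sum_add_distrib, Finset.sum_add_distrib]
      _ = _ := by
          refine Finset.sum_congr rfl fun k _ => ?_
          rw [hrec m (k : ℤ) (by positivity)]
          simp only [Int.toNat_natCast]
          ring
  -- main induction
  have main : ∀ n m : ℕ, ∑ k ∈ Finset.range (n + m + 1), a n (k : ℤ) * a m (k : ℤ)
      = a (n + m) 0 := by
    intro n
    induction n with
    | zero =>
      intro m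
      simp only [Nat.zero_add]
      rw [Finset.sum_eq_single 0]
      · simp [h0]
      · intro k _ hk
        rw [h0, if_neg (by exact_mod_cast hk)]; ring
      · intro h; exact absurd (Finset.mem_range.mpr (by omega)) h
    | succ n ih =>
      intro m
      have hb : n + 1 + m + 1 = n + m + 1 + 1 := by ring
      rw [hb, hsym (n + m + 1) n m (by omega) (by omega)]
      have := ih (m + 1)
      rw [show n + (m + 1) = n + m + 1 from by ring] at this
      rw [this, show n + 1 + m = n + m + 1 from by ring]
  -- conclude
  intro m n
  rw [← main n m]
  refine Finset.sum_subset (Finset.range_subset_range.mpr (by omega)) fun k _ hk => ?_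
  rw [hzero n (k : ℤ) (by simp at hk; omega)]
  ring
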